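/- Let p ≠ 3 be prime and s a complex number with Re(s) > −2, and let T be defined by T(r) = r⁻⁷ Σ_{c=1,(c,r)=1}^{r} |S(r,c)|⁶. Then Σ_{k=0}^{∞} T(p^k)/p^{ks} = (1 − p^{−(3s+6)})⁻¹ · (1 + p^{−(s+7)} Σ_{c=1}^{p−1} |S(p,c)|⁶ + (p−1)p^{−(2s+7)} − p^{−(3s+7)}), where the series converges absolutely. -/

import Mathlib

open Finset

noncomputable def e (x : ℝ) : ℂ := Complex.exp (2 * Real.pi * Complex.I * x)

lemma e_add (x y : ℝ) : e (x + y) = e x * e y := by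
  simp only [e, ← Complex.exp_add]
  push_cast
  ring_nf

lemma e_int (n : ℤ) : e n = 1 := by
  have := Complex.exp_int_mul_two_pi_mul_I n
  simp only [e]
  rw [← this]
  push_cast
  ring_nf

lemma e_zero : e 0 = 1 := by simpa using e_int 0

lemma e_pow (x : ℝ) (m : ℕ) : e x ^ m = e (m * x) := by
  simp only [e, ← Complex.exp_nat_mul]
  push_cast
  ring_nf

lemma e_eq_one_iff (x : ℝ) : e x = 1 ↔ ∃ n : ℤ, x = n := by
  rw [e, Complex.exp_eq_one_iff]
  constructor
  · rintro ⟨n, hn⟩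
    refine ⟨n, ?_⟩
    have h2 : (2 * (Real.pi:ℂ) * Complex.I) ≠ 0 := by
      simp [Real.pi_ne_zero, Complex.I_ne_zero]
    have : (x:ℂ) = n := mul_right_cancel₀ h2 (by rw [mul_comm]; exact hn)
    exact_mod_cast this
  · rintro ⟨n, hn⟩
    exact ⟨n, by rw [hn]; push_cast; ring⟩

lemma sum_e_frac (n : ℕ) (hn : 0 < n) (b : ℤ) :
    ∑ y ∈ range n, e (((b * y : ℤ) : ℝ) / n) = if (n:ℤ) ∣ b then (n:ℂ) else 0 := by
  have hterm : ∀ y : ℕ, e (((b * y : ℤ) : ℝ) / n) = e ((b:ℝ)/n) ^ y := by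
    intro y
    rw [e_pow]
    congr 1
    push_cast
    ring
  simp only [hterm]
  by_cases hd : (n:ℤ) ∣ b
  · obtain ⟨m, hm⟩ := hd
    have : e ((b:ℝ)/n) = 1 := by
      rw [e_eq_one_iff]
      exact ⟨m, by rw [hm]; push_cast; field_simp⟩
    simp only [this, one_pow, Finset.sum_const, card_range, nsmul_eq_mul, mul_one]
    rw [if_pos ⟨m, hm⟩]
  · have hne : e ((b:ℝ)/n) ≠ 1 := by
      intro hone
      rw [e_eq_one_iff] at hone
      obtain ⟨m, hm⟩ := hone
      apply hd
      refine ⟨m, ?_⟩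
      have : (b:ℝ) = n * m := by
        field_simp at hm
        linarith [hm]
      exact_mod_cast this
    rw [geom_sum_eq hne, e_pow]
    have : (n:ℝ) * ((b:ℝ)/n) = (b:ℝ) := by field_simp
    rw [this]
    have : e (b:ℝ) = 1 := by rw [show ((b:ℝ)) = ((b:ℤ):ℝ) by push_cast; ring]; exact e_int b
    simp [this, hd]

noncomputable def S' (q : ℕ) (b : ℤ) : ℂ :=
  ∑ m ∈ Finset.range q, e ((b : ℝ) * (m : ℝ) ^ 3 / q)

noncomputable def S (q : ℕ) (b : ℤ) : ℂ :=
  ∑ m ∈ Finset.Icc 1 q, e ((b : ℝ) * (m : ℝ) ^ 3 / q)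

lemma S_eq_S' (q : ℕ) (hq : 0 < q) (b : ℤ) : S q b = S' q b := by
  have h1 : Finset.Icc 1 q = Finset.Ico 1 (q+1) := by rw [Finset.Ico_add_one_right_eq_Icc]
  have h0 : Finset.range q = Finset.Ico 0 q := by rw [Finset.range_eq_Ico]
  rw [S, S', h1, h0, Finset.sum_Ico_succ_top hq, Finset.sum_eq_sum_Ico_succ_bot hq]
  have hq' : (q:ℝ) ≠ 0 := Nat.cast_ne_zero.mpr hq.ne'
  have harg : (b:ℝ) * (q:ℝ)^3 / q = ((b * q^2 : ℤ) : ℝ) := by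
    push_cast; field_simp
  have h1' : e ((b:ℝ) * (q:ℝ)^3 / q) = 1 := by rw [harg, e_int]
  have h0' : e ((b:ℝ) * ((0:ℕ):ℝ)^3 / q) = 1 := by norm_num [e_zero]
  rw [h1', h0']
  norm_num [add_comm]

lemma sum_range_mul {M : Type*} [AddCommMonoid M] (f : ℕ → M) (N : ℕ) :
    ∀ K : ℕ, ∑ m ∈ range (N * K), f m = ∑ y ∈ range K, ∑ x ∈ range N, f (N * y + x)
  | 0 => by simp
  | (K+1) => by
    rw [Nat.mul_succ, Finset.sum_range_add, Finset.sum_range_succ, sum_range_mul f N K]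

lemma periodic_step (N : ℕ) (hN : 0 < N) (a : ℤ) (K : ℕ) :
    ∑ z ∈ range (N * K), e ((a:ℝ) * (z:ℝ)^3 / N) =
      K * ∑ x ∈ range N, e ((a:ℝ) * (x:ℝ)^3 / N) := by
  rw [sum_range_mul]
  have hN' : (N:ℝ) ≠ 0 := Nat.cast_ne_zero.mpr hN.ne'
  have hterm : ∀ y x : ℕ, e ((a:ℝ) * ((N * y + x : ℕ):ℝ)^3 / N) = e ((a:ℝ) * (x:ℝ)^3 / N) := by
    intro y x
    have harg : (a:ℝ) * ((N * y + x : ℕ):ℝ)^3 / N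
        = (a:ℝ) * (x:ℝ)^3 / N + ((a * (3*x^2*y + 3*x*N*y^2 + N^2*y^3) : ℤ) : ℝ) := by
      push_cast; field_simp; ring
    rw [harg, e_add, e_int, mul_one]
  simp only [hterm]
  rw [Finset.sum_const, card_range, nsmul_eq_mul]

lemma S'_core (p : ℕ) (hp : p.Prime) (hp3 : p ≠ 3) (a : ℤ) (ha : ¬ (p:ℤ) ∣ a) (j : ℕ) :
    S' (p^(j+2)) a = p * ∑ z ∈ range (p^j), e ((a:ℝ) * ((p*z : ℕ):ℝ)^3 / (p^(j+2) : ℕ)) := by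
  have hp0 : 0 < p := hp.pos
  have hppow : (0:ℝ) < (p:ℝ)^(j+2) := by positivity
  have hpne : ((p:ℝ))^(j+2) ≠ 0 := hppow.ne'
  -- split the sum
  have hsplit : S' (p^(j+2)) a
      = ∑ y ∈ range p, ∑ x ∈ range (p^(j+1)), e ((a:ℝ) * ((p^(j+1) * y + x : ℕ):ℝ)^3 / (p^(j+2):ℕ)) := by
    rw [S', show p^(j+2) = p^(j+1) * p by ring, sum_range_mul]
  rw [hsplit]
  -- term decomposition
  have hterm : ∀ y x : ℕ, e ((a:ℝ) * ((p^(j+1) * y + x : ℕ):ℝ)^3 / (p^(j+2):ℕ))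
      = e ((a:ℝ) * (x:ℝ)^3 / (p^(j+2):ℕ)) * e ((((3*a*x^2) * y : ℤ):ℝ) / p) := by
    intro y x
    have harg : (a:ℝ) * ((p^(j+1) * y + x : ℕ):ℝ)^3 / (p^(j+2):ℕ)
        = (a:ℝ) * (x:ℝ)^3 / (p^(j+2):ℕ) + (((3*a*x^2) * y : ℤ):ℝ) / p
          + ((3*a*x*y^2*p^j + a*y^3*p^(2*j+1) : ℤ) : ℝ) := by
      have hpr : ((p:ℝ)) ≠ 0 := Nat.cast_ne_zero.mpr hp0.ne'
      push_cast
      field_simp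
      ring
    rw [harg, e_add, e_add, e_int, mul_one]
  simp only [hterm]
  rw [Finset.sum_comm]
  have hinner : ∀ x : ℕ, ∑ y ∈ range p, e ((a:ℝ) * (x:ℝ)^3 / (p^(j+2):ℕ)) * e ((((3*a*x^2) * y : ℤ):ℝ) / p)
      = e ((a:ℝ) * (x:ℝ)^3 / (p^(j+2):ℕ)) * (if (p:ℤ) ∣ 3*a*x^2 then (p:ℂ) else 0) := by
    intro x
    rw [← Finset.mul_sum, sum_e_frac p hp0]
  simp only [hinner]
  -- divisibility criterion
  have hdvd : ∀ x : ℕ, (p:ℤ) ∣ 3*a*x^2 ↔ p ∣ x := by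
    intro x
    have hpZ : Prime (p:ℤ) := Nat.prime_iff_prime_int.mp hp
    constructor
    · intro h
      rcases hpZ.dvd_mul.mp h with h1 | h1
      · rcases hpZ.dvd_mul.mp h1 with h2 | h2
        · exfalso
          have h3 : p ∣ 3 := by exact_mod_cast h2
          exact hp3 ((Nat.prime_dvd_prime_iff_eq hp (by norm_num)).mp h3)
        · exact absurd h2 ha
      · have : (p:ℤ) ∣ (x:ℤ) := hpZ.dvd_of_dvd_pow h1
        exact_mod_cast this
    · intro h
      have : (p:ℤ) ∣ (x:ℤ) := by exact_mod_cast h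
      exact Dvd.dvd.mul_left (dvd_pow this two_ne_zero) (3*a)
  simp only [hdvd]
  have hswap : ∀ x : ℕ, e ((a:ℝ) * (x:ℝ)^3 / (p^(j+2):ℕ)) * (if p ∣ x then (p:ℂ) else 0)
      = if p ∣ x then (p:ℂ) * e ((a:ℝ) * (x:ℝ)^3 / (p^(j+2):ℕ)) else 0 := by
    intro x; split_ifs <;> ring
  simp only [hswap]
  rw [← Finset.sum_filter]
  have himg : (range (p^(j+1))).filter (fun x => p ∣ x) = (range (p^j)).image (fun z => p*z) := by
    ext x
    simp only [mem_filter, mem_range, mem_image]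
    constructor
    · rintro ⟨hx, z, rfl⟩
      refine ⟨z, ?_, rfl⟩
      rw [pow_succ, mul_comm (p^j) p] at hx
      exact (Nat.mul_lt_mul_left hp0).mp hx
    · rintro ⟨z, hz, rfl⟩
      refine ⟨?_, ⟨z, rfl⟩⟩
      rw [pow_succ, mul_comm (p^j) p]
      exact (Nat.mul_lt_mul_left hp0).mpr hz
  rw [himg, Finset.sum_image (fun a _ b _ h => by
    exact Nat.eq_of_mul_eq_mul_left hp0 h), Finset.mul_sum]

lemma S'_one (a : ℤ) : S' 1 a = 1 := by
  norm_num [S', e_zero]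

lemma S'_two (p : ℕ) (hp : p.Prime) (hp3 : p ≠ 3) (a : ℤ) (ha : ¬ (p:ℤ) ∣ a) :
    S' (p^2) a = p := by
  have h := S'_core p hp hp3 a ha 0
  norm_num [e_zero] at h
  exact h

lemma S'_rec (p : ℕ) (hp : p.Prime) (hp3 : p ≠ 3) (a : ℤ) (ha : ¬ (p:ℤ) ∣ a) (i : ℕ) :
    S' (p^(i+3)) a = (p:ℂ)^2 * S' (p^i) a := by
  have hp0 : 0 < p := hp.pos
  have hpr : (p:ℝ) ≠ 0 := Nat.cast_ne_zero.mpr hp0.ne'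
  have h := S'_core p hp hp3 a ha (i+1)
  have he : (i+1)+2 = i+3 := by omega
  rw [he] at h
  have hterm : ∀ z : ℕ, e ((a:ℝ) * ((p*z : ℕ):ℝ)^3 / (p^(i+3) : ℕ))
      = e ((a:ℝ) * (z:ℝ)^3 / (p^i : ℕ)) := by
    intro z
    congr 1
    push_cast
    field_simp
    ring
  simp only [hterm] at h
  rw [show p^(i+1) = p^i * p by rw [pow_succ],
    periodic_step (p^i) (pow_pos hp0 i) a p] at h
  rw [h, ← S']
  ring

lemma S'_val (p : ℕ) (hp : p.Prime) (hp3 : p ≠ 3) (a : ℤ) (ha : ¬ (p:ℤ) ∣ a) : ∀ u : ℕ,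
    S' (p^(3*u+1)) a = (p:ℂ)^(2*u) * S' p a ∧
    S' (p^(3*u+2)) a = (p:ℂ)^(2*u+1) ∧
    S' (p^(3*u+3)) a = (p:ℂ)^(2*u+2)
  | 0 => by
    refine ⟨by norm_num, by simpa using S'_two p hp hp3 a ha, ?_⟩
    have := S'_rec p hp hp3 a ha 0
    simpa [S'_one] using this
  | (u+1) => by
    obtain ⟨h1, h2, h3⟩ := S'_val p hp hp3 a ha u
    refine ⟨?_, ?_, ?_⟩
    · rw [show 3*(u+1)+1 = (3*u+1)+3 by omega, S'_rec p hp hp3 a ha, h1,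
        show 2*(u+1) = (2*u)+2 by omega, pow_add]
      ring
    · rw [show 3*(u+1)+2 = (3*u+2)+3 by omega, S'_rec p hp hp3 a ha, h2,
        show 2*(u+1)+1 = (2*u+1)+2 by omega, pow_add]
      ring
    · rw [show 3*(u+1)+3 = (3*u+3)+3 by omega, S'_rec p hp hp3 a ha, h3,
        show 2*(u+1)+2 = (2*u+2)+2 by omega, pow_add]
      ring

noncomputable def T (r : ℕ) : ℝ :=
  (r : ℝ)⁻¹ ^ 7 * ∑ c ∈ (Finset.Icc 1 r).filter (fun c => Nat.gcd c r = 1),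
    ‖S r c‖ ^ 6

lemma S'_periodic (p : ℕ) (hp0 : 0 < p) (c t : ℤ) : S' p (c + p*t) = S' p c := by
  unfold S'
  apply Finset.sum_congr rfl
  intro m _
  have hpr : (p:ℝ) ≠ 0 := Nat.cast_ne_zero.mpr hp0.ne'
  have harg : (((c + p*t : ℤ)):ℝ) * (m:ℝ)^3 / p = (c:ℝ) * (m:ℝ)^3 / p + ((t*m^3 : ℤ):ℝ) := by
    push_cast; field_simp
  rw [harg, e_add, e_int, mul_one]

lemma sum_coprime_reduce (p : ℕ) (hp : p.Prime) (k : ℕ) (hk : 1 ≤ k) (g : ℕ → ℝ)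
    (hg : ∀ x y : ℕ, g (x + p*y) = g x) :
    ∑ c ∈ (Finset.Icc 1 (p^k)).filter (fun c => Nat.gcd c (p^k) = 1), g c
      = p^(k-1) * ∑ x ∈ Finset.Icc 1 (p-1), g x := by
  have hp0 : 0 < p := hp.pos
  have hp2 : 2 ≤ p := hp.two_le
  have hpk2 : 2 ≤ p^k := le_trans hp2 (Nat.le_self_pow (by omega) p)
  have hco : ∀ c : ℕ, Nat.gcd c (p^k) = 1 ↔ ¬ p ∣ c := by
    intro c
    have : Nat.Coprime c (p^k) ↔ Nat.Coprime c p := Nat.coprime_pow_right_iff (by omega) c p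
    rw [show (Nat.gcd c (p^k) = 1) = Nat.Coprime c (p^k) from rfl, this,
      Nat.coprime_comm, hp.coprime_iff_not_dvd]
  have hfe : (Finset.Icc 1 (p^k)).filter (fun c => Nat.gcd c (p^k) = 1)
      = (Finset.range (p^k)).filter (fun c => ¬ p ∣ c) := by
    ext c
    simp only [Finset.mem_filter, Finset.mem_Icc, Finset.mem_range, hco]
    constructor
    · rintro ⟨⟨h1, h2⟩, h3⟩
      have hcne : c ≠ p^k := by
        rintro rfl
        exact h3 (dvd_pow_self p (by omega))
      exact ⟨by omega, h3⟩
    · rintro ⟨h1, h2⟩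
      have hc0 : c ≠ 0 := by
        rintro rfl
        exact h2 (dvd_zero p)
      exact ⟨⟨by omega, by omega⟩, h2⟩
  rw [hfe, Finset.sum_filter, show p^k = p * p^(k-1) by
      rw [← pow_succ']; congr 1; omega,
    sum_range_mul]
  have hterm : ∀ y x : ℕ, (if ¬ p ∣ (p*y+x) then g (p*y+x) else 0)
      = (if ¬ p ∣ x then g x else 0) := by
    intro y x
    have hdv : p ∣ (p*y+x) ↔ p ∣ x := by
      constructor
      · intro h
        have := (Nat.dvd_add_right (Dvd.intro y rfl)).mp h
        exact this
      · intro h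
        exact Dvd.dvd.add (Dvd.intro y rfl) h
    have hgx : g (p*y+x) = g x := by rw [add_comm, hg]
    simp only [hdv, hgx]
  simp only [hterm]
  rw [Finset.sum_const, Finset.card_range, nsmul_eq_mul]
  congr 1
  · push_cast; ring
  rw [← Finset.sum_filter]
  apply Finset.sum_congr
  · ext x
    simp only [Finset.mem_filter, Finset.mem_range, Finset.mem_Icc]
    constructor
    · rintro ⟨h1, h2⟩
      have hx0 : x ≠ 0 := by
        rintro rfl
        exact h2 (dvd_zero p)
      exact ⟨by omega, by omega⟩
    · rintro ⟨h1, h2⟩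
      refine ⟨by omega, ?_⟩
      intro hd
      have := Nat.le_of_dvd (by omega) hd
      omega
  · intros; rfl

section Tvals
variable (p : ℕ) (hp : p.Prime) (hp3 : p ≠ 3)

lemma coprime_not_dvd (hp : p.Prime) {k c : ℕ} (hk : 1 ≤ k) (hc : Nat.gcd c (p^k) = 1) :
    ¬ (p:ℤ) ∣ (c:ℤ) := by
  intro h
  have hnat : p ∣ c := by exact_mod_cast h
  have : Nat.Coprime c p := by
    have := (Nat.coprime_pow_right_iff (by omega) c p).mp hc
    exact this
  rw [Nat.coprime_comm, hp.coprime_iff_not_dvd] at this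
  exact this hnat

lemma g_periodic (hp : p.Prime) : ∀ x y : ℕ,
    (fun c : ℕ => ‖S p (c:ℤ)‖ ^ 6) (x + p*y)
      = (fun c : ℕ => ‖S p (c:ℤ)‖ ^ 6) x := by
  intro x y
  have hp0 : 0 < p := hp.pos
  have h1 : S p ((x : ℤ) + (p:ℤ)*(y:ℤ)) = S p x := by
    rw [S_eq_S' p hp0, S_eq_S' p hp0, S'_periodic p hp0]
  simp only []
  have hc : ((x + p*y : ℕ) : ℤ) = (x:ℤ) + (p:ℤ)*(y:ℤ) := by push_cast; ring
  rw [hc, h1]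

lemma T_val1 (hp : p.Prime) (hp3 : p ≠ 3) (u : ℕ) :
    T (p^(3*u+1)) = (∑ x ∈ Finset.Icc 1 (p-1), ‖S p x‖ ^ 6) / (p:ℝ)^(6*u+7) := by
  have hp0 : 0 < p := hp.pos
  have hpr : (0:ℝ) < (p:ℝ) := by exact_mod_cast hp0
  rw [T]
  have hsum : ∑ c ∈ (Finset.Icc 1 (p^(3*u+1))).filter (fun c => Nat.gcd c (p^(3*u+1)) = 1),
      ‖S (p^(3*u+1)) c‖ ^ 6
      = ∑ c ∈ (Finset.Icc 1 (p^(3*u+1))).filter (fun c => Nat.gcd c (p^(3*u+1)) = 1),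
      (p:ℝ)^(12*u) * (‖S p c‖ ^ 6) := by
    apply Finset.sum_congr rfl
    intro c hc
    rw [Finset.mem_filter] at hc
    have ha : ¬ (p:ℤ) ∣ (c:ℤ) := coprime_not_dvd p hp (by omega) hc.2
    have hS : S (p^(3*u+1)) c = (p:ℂ)^(2*u) * S p c := by
      rw [S_eq_S' _ (pow_pos hp0 _), S_eq_S' _ hp0]
      exact (S'_val p hp hp3 c ha u).1
    rw [hS, norm_mul, mul_pow, norm_pow, Complex.norm_natCast, ← pow_mul]
    congr 2
    omega
  rw [hsum, ← Finset.mul_sum,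
    sum_coprime_reduce p hp (3*u+1) (by omega) _ (g_periodic p hp), show 3*u+1-1 = 3*u by omega]
  have hne : (p:ℝ) ≠ 0 := hpr.ne'
  field_simp
  push_cast
  ring
lemma T_val2 (hp : p.Prime) (hp3 : p ≠ 3) (u : ℕ) :
    T (p^(3*u+2)) = ((p:ℝ) - 1) / (p:ℝ)^(6*u+7) := by
  have hp0 : 0 < p := hp.pos
  have hpr : (0:ℝ) < (p:ℝ) := by exact_mod_cast hp0
  rw [T]
  have hsum : ∑ c ∈ (Finset.Icc 1 (p^(3*u+2))).filter (fun c => Nat.gcd c (p^(3*u+2)) = 1),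
      ‖S (p^(3*u+2)) c‖ ^ 6
      = ∑ c ∈ (Finset.Icc 1 (p^(3*u+2))).filter (fun c => Nat.gcd c (p^(3*u+2)) = 1),
      (fun _ : ℕ => (p:ℝ)^(12*u+6)) c := by
    apply Finset.sum_congr rfl
    intro c hc
    rw [Finset.mem_filter] at hc
    have ha : ¬ (p:ℤ) ∣ (c:ℤ) := coprime_not_dvd p hp (by omega) hc.2
    have hS : S (p^(3*u+2)) c = (p:ℂ)^(2*u+1) := by
      rw [S_eq_S' _ (pow_pos hp0 _)]
      exact (S'_val p hp hp3 c ha u).2.1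
    rw [hS, norm_pow, Complex.norm_natCast, ← pow_mul]
    congr 1
    omega
  rw [hsum, sum_coprime_reduce p hp (3*u+2) (by omega) (fun _ => (p:ℝ)^(12*u+6)) (fun _ _ => rfl),
    show 3*u+2-1 = 3*u+1 by omega, Finset.sum_const, Nat.card_Icc, nsmul_eq_mul]
  have hne : (p:ℝ) ≠ 0 := hpr.ne'
  have hp2 : 2 ≤ p := hp.two_le
  have hcast : ((p-1+1-1 : ℕ):ℝ) = (p:ℝ) - 1 := by
    rw [show p-1+1-1 = p-1 by omega, Nat.cast_sub (by omega)]; norm_num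
  rw [hcast]
  push_cast
  field_simp
  ring
lemma T_val3 (hp : p.Prime) (hp3 : p ≠ 3) (u : ℕ) :
    T (p^(3*u+3)) = ((p:ℝ) - 1) / (p:ℝ)^(6*u+7) := by
  have hp0 : 0 < p := hp.pos
  have hpr : (0:ℝ) < (p:ℝ) := by exact_mod_cast hp0
  rw [T]
  have hsum : ∑ c ∈ (Finset.Icc 1 (p^(3*u+3))).filter (fun c => Nat.gcd c (p^(3*u+3)) = 1),
      ‖S (p^(3*u+3)) c‖ ^ 6
      = ∑ c ∈ (Finset.Icc 1 (p^(3*u+3))).filter (fun c => Nat.gcd c (p^(3*u+3)) = 1),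
      (fun _ : ℕ => (p:ℝ)^(12*u+12)) c := by
    apply Finset.sum_congr rfl
    intro c hc
    rw [Finset.mem_filter] at hc
    have ha : ¬ (p:ℤ) ∣ (c:ℤ) := coprime_not_dvd p hp (by omega) hc.2
    have hS : S (p^(3*u+3)) c = (p:ℂ)^(2*u+2) := by
      rw [S_eq_S' _ (pow_pos hp0 _)]
      exact (S'_val p hp hp3 c ha u).2.2
    rw [hS, norm_pow, Complex.norm_natCast, ← pow_mul]
    congr 1
    omega
  rw [hsum, sum_coprime_reduce p hp (3*u+3) (by omega) (fun _ => (p:ℝ)^(12*u+12)) (fun _ _ => rfl),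
    show 3*u+3-1 = 3*u+2 by omega, Finset.sum_const, Nat.card_Icc, nsmul_eq_mul]
  have hne : (p:ℝ) ≠ 0 := hpr.ne'
  have hp2 : 2 ≤ p := hp.two_le
  have hcast : ((p-1+1-1 : ℕ):ℝ) = (p:ℝ) - 1 := by
    rw [show p-1+1-1 = p-1 by omega, Nat.cast_sub (by omega)]; norm_num
  rw [hcast]
  push_cast
  field_simp
  ring

lemma T_one : T 1 = 1 := by
  have : S 1 1 = 1 := by
    rw [S]
    norm_num
    rw [show ((1:ℝ)) = (((1:ℤ)):ℝ) by norm_num]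
    exact e_int 1
  norm_num [T, Finset.Icc_self, Finset.filter_singleton, this]

end Tvals

theorem local_factor_p (p : ℕ) (hp : p.Prime) (hp3 : p ≠ 3) (s : ℂ)
    (hs : -2 < s.re) :
    Summable (fun k : ℕ => ‖(T (p ^ k) : ℂ) / (p : ℂ) ^ ((k : ℂ) * s)‖) ∧
    (∑' k : ℕ, (T (p ^ k) : ℂ) / (p : ℂ) ^ ((k : ℂ) * s)) =
      (1 - (p : ℂ) ^ (-(3 * s + 6)))⁻¹ *
        (1 + (p : ℂ) ^ (-(s + 7)) * ∑ c ∈ Finset.Icc 1 (p - 1), (‖S p c‖ ^ 6 : ℂ)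
          + ((p : ℂ) - 1) * (p : ℂ) ^ (-(2 * s + 7)) - (p : ℂ) ^ (-(3 * s + 7))) := by
  have hp0 : 0 < p := hp.pos
  have hp2 : 2 ≤ p := hp.two_le
  have hpr : (0:ℝ) < (p:ℝ) := by exact_mod_cast hp0
  have hpC : (p:ℂ) ≠ 0 := by exact_mod_cast hpr.ne'
  set L : ℂ := ((Real.log p : ℝ) : ℂ) with hL
  have hP : ∀ w : ℂ, (p:ℂ) ^ w = Complex.exp (L * w) := by
    intro w
    have hlogeq : L = Complex.log (p:ℂ) := by
      rw [hL, show ((p:ℕ):ℂ) = (((p:ℕ):ℝ):ℂ) by norm_cast]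
      exact Complex.ofReal_log hpr.le
    rw [Complex.cpow_def_of_ne_zero hpC, hlogeq]
  have hPn : ∀ n : ℕ, ((p:ℂ))^(n:ℕ) = Complex.exp (L * n) := by
    intro n
    rw [← Complex.cpow_natCast, hP]
  set A : ℝ := ∑ x ∈ Finset.Icc 1 (p-1), ‖S p x‖ ^ 6 with hA
  set f : ℕ → ℂ := fun k => ((T (p ^ k) : ℝ) : ℂ) / (p : ℂ) ^ ((k : ℂ) * s) with hfdef
  set q : ℂ := (p : ℂ) ^ (-(3 * s + 6)) with hqdef
  set b1 : ℂ := ((A:ℝ) : ℂ) * (p : ℂ) ^ (-(s + 7)) with hb1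
  set b2 : ℂ := ((p:ℂ) - 1) * (p : ℂ) ^ (-(2*s + 7)) with hb2
  set b3 : ℂ := ((p:ℂ) - 1) * (p : ℂ) ^ (-(3*s + 7)) with hb3
  have hdiv : ∀ (a x : ℂ), a / Complex.exp x = a * Complex.exp (-x) := by
    intro a x
    rw [Complex.exp_neg, div_eq_mul_inv]
  -- norm of q
  have hq : ‖q‖ < 1 := by
    rw [hqdef, hP, Complex.norm_exp, Real.exp_lt_one_iff]
    have hre : (L * (-(3 * s + 6))).re = Real.log p * (-(3 * s.re + 6)) := by
      rw [hL, Complex.re_ofReal_mul]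
      congr 1
      simp
    rw [hre]
    have hlog : 0 < Real.log p := Real.log_pos (by exact_mod_cast hp2)
    exact mul_neg_of_pos_of_neg hlog (by linarith)
  have h1q : (1:ℂ) - q ≠ 0 := by
    intro h
    have : q = 1 := by linear_combination -h
    rw [this] at hq
    simp at hq
  -- values of f
  have hf0 : f 0 = 1 := by
    rw [hfdef]
    simp only [pow_zero, Nat.cast_zero, zero_mul, Complex.cpow_zero, div_one, T_one]
    norm_num
  have hf1 : ∀ u : ℕ, f (3*u+1) = b1 * q^u := by
    intro u
    rw [hfdef]
    simp only []
    rw [T_val1 p hp hp3 u, ← hA]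
    push_cast
    rw [hPn (6*u+7), hP ((3*(u:ℂ)+1)*s), hb1, hqdef, hP (-(s+7)), hP (-(3*s+6)),
      ← Complex.exp_nat_mul, div_div, ← Complex.exp_add, hdiv, mul_assoc, ← Complex.exp_add]
    congr 2
    push_cast
    ring
  have hf2 : ∀ u : ℕ, f (3*u+2) = b2 * q^u := by
    intro u
    rw [hfdef]
    simp only []
    rw [T_val2 p hp hp3 u]
    push_cast
    rw [hPn (6*u+7), hP ((3*(u:ℂ)+2)*s), hb2, hqdef, hP (-(2*s+7)), hP (-(3*s+6)),
      ← Complex.exp_nat_mul, div_div, ← Complex.exp_add, hdiv, mul_assoc, ← Complex.exp_add]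
    congr 2
    push_cast
    ring
  have hf3 : ∀ u : ℕ, f (3*u+3) = b3 * q^u := by
    intro u
    rw [hfdef]
    simp only []
    rw [T_val3 p hp hp3 u]
    push_cast
    rw [hPn (6*u+7), hP ((3*(u:ℂ)+3)*s), hb3, hqdef, hP (-(3*s+7)), hP (-(3*s+6)),
      ← Complex.exp_nat_mul, div_div, ← Complex.exp_add, hdiv, mul_assoc, ← Complex.exp_add]
    congr 2
    push_cast
    ring
  -- decomposition
  set F0 : ℕ → ℂ := fun k => if k = 0 then (1:ℂ) else 0 with hF0
  set F1 : ℕ → ℂ := fun k => if k % 3 = 1 then f k else 0 with hF1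
  set F2 : ℕ → ℂ := fun k => if k % 3 = 2 then f k else 0 with hF2
  set F3 : ℕ → ℂ := fun k => if k % 3 = 0 ∧ k ≠ 0 then f k else 0 with hF3
  have hdecomp : ∀ k, f k = F0 k + F1 k + F2 k + F3 k := by
    intro k
    rw [hF0, hF1, hF2, hF3]
    rcases Nat.eq_zero_or_pos k with rfl | hk
    · simp [hf0]
    · simp only []
      split_ifs <;> first | ring1 | (exfalso; omega)
  have hinj1 : Function.Injective (fun u : ℕ => 3*u+1) := by
    intro a b h
    have h' : 3*a+1 = 3*b+1 := h
    omega
  have hinj2 : Function.Injective (fun u : ℕ => 3*u+2) := by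
    intro a b h
    have h' : 3*a+2 = 3*b+2 := h
    omega
  have hinj3 : Function.Injective (fun u : ℕ => 3*u+3) := by
    intro a b h
    have h' : 3*a+3 = 3*b+3 := h
    omega
  have hvan1 : ∀ x ∉ Set.range (fun u : ℕ => 3*u+1), F1 x = 0 := by
    intro x hx
    rw [hF1]
    simp only [ite_eq_right_iff]
    intro h
    exact absurd ⟨x/3, show 3*(x/3)+1 = x by omega⟩ hx
  have hvan2 : ∀ x ∉ Set.range (fun u : ℕ => 3*u+2), F2 x = 0 := by
    intro x hx
    rw [hF2]
    simp only [ite_eq_right_iff]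
    intro h
    exact absurd ⟨x/3, show 3*(x/3)+2 = x by omega⟩ hx
  have hvan3 : ∀ x ∉ Set.range (fun u : ℕ => 3*u+3), F3 x = 0 := by
    intro x hx
    rw [hF3]
    simp only [ite_eq_right_iff]
    rintro ⟨h, h0⟩
    exact absurd ⟨x/3 - 1, show 3*(x/3-1)+3 = x by omega⟩ hx
  have hcomp1 : (F1 ∘ (fun u : ℕ => 3*u+1)) = fun u => b1 * q^u := by
    funext u
    simp only [Function.comp, hF1]
    rw [if_pos (by omega), hf1 u]
  have hcomp2 : (F2 ∘ (fun u : ℕ => 3*u+2)) = fun u => b2 * q^u := by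
    funext u
    simp only [Function.comp, hF2]
    rw [if_pos (by omega), hf2 u]
  have hcomp3 : (F3 ∘ (fun u : ℕ => 3*u+3)) = fun u => b3 * q^u := by
    funext u
    simp only [Function.comp, hF3]
    rw [if_pos (by omega), hf3 u]
  have hgeom : HasSum (fun u : ℕ => q^u) (1-q)⁻¹ := hasSum_geometric_of_norm_lt_one hq
  have hS0 : HasSum F0 1 := hasSum_ite_eq 0 1
  have hS1 : HasSum F1 (b1 * (1-q)⁻¹) :=
    (Function.Injective.hasSum_iff hinj1 hvan1).mp (by rw [hcomp1]; exact hgeom.mul_left b1)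
  have hS2 : HasSum F2 (b2 * (1-q)⁻¹) :=
    (Function.Injective.hasSum_iff hinj2 hvan2).mp (by rw [hcomp2]; exact hgeom.mul_left b2)
  have hS3 : HasSum F3 (b3 * (1-q)⁻¹) :=
    (Function.Injective.hasSum_iff hinj3 hvan3).mp (by rw [hcomp3]; exact hgeom.mul_left b3)
  have hSf : HasSum f (1 + b1 * (1-q)⁻¹ + b2 * (1-q)⁻¹ + b3 * (1-q)⁻¹) := by
    have h := ((hS0.add hS1).add hS2).add hS3
    rwa [show (fun k => F0 k + F1 k + F2 k + F3 k) = f from funext fun k => (hdecomp k).symm] at h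
  -- summability of norms
  have hqn : ‖q‖ < 1 := hq
  have hgsum : Summable (fun u : ℕ => ‖q‖^u) := summable_geometric_of_lt_one (norm_nonneg q) hqn
  have hnorm1 : Summable (fun k => ‖F1 k‖) := by
    apply (Function.Injective.summable_iff hinj1 (fun x hx => by rw [hvan1 x hx, norm_zero])).mp
    have : ((fun k => ‖F1 k‖) ∘ (fun u : ℕ => 3*u+1)) = fun u => ‖b1‖ * ‖q‖^u := by
      funext u
      simp only [Function.comp]
      rw [show F1 (3*u+1) = b1 * q^u from congrFun hcomp1 u, norm_mul, norm_pow]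
    rw [this]
    exact hgsum.mul_left _
  have hnorm2 : Summable (fun k => ‖F2 k‖) := by
    apply (Function.Injective.summable_iff hinj2 (fun x hx => by rw [hvan2 x hx, norm_zero])).mp
    have : ((fun k => ‖F2 k‖) ∘ (fun u : ℕ => 3*u+2)) = fun u => ‖b2‖ * ‖q‖^u := by
      funext u
      simp only [Function.comp]
      rw [show F2 (3*u+2) = b2 * q^u from congrFun hcomp2 u, norm_mul, norm_pow]
    rw [this]
    exact hgsum.mul_left _
  have hnorm3 : Summable (fun k => ‖F3 k‖) := by
    apply (Function.Injective.summable_iff hinj3 (fun x hx => by rw [hvan3 x hx, norm_zero])).mp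
    have : ((fun k => ‖F3 k‖) ∘ (fun u : ℕ => 3*u+3)) = fun u => ‖b3‖ * ‖q‖^u := by
      funext u
      simp only [Function.comp]
      rw [show F3 (3*u+3) = b3 * q^u from congrFun hcomp3 u, norm_mul, norm_pow]
    rw [this]
    exact hgsum.mul_left _
  have hnorm0 : Summable (fun k => ‖F0 k‖) := by
    have : (fun k => ‖F0 k‖) = (fun k => if k = 0 then (1:ℝ) else 0) := by
      funext k
      rw [hF0]
      by_cases h : k = 0 <;> simp [h]
    rw [this]
    exact (hasSum_ite_eq 0 (1:ℝ)).summable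
  have hsummable : Summable (fun k : ℕ => ‖f k‖) := by
    apply Summable.of_nonneg_of_le (fun k => norm_nonneg _)
      (fun k => ?_) (((hnorm0.add hnorm1).add hnorm2).add hnorm3)
    rw [hdecomp k]
    calc ‖F0 k + F1 k + F2 k + F3 k‖ ≤ ‖F0 k + F1 k + F2 k‖ + ‖F3 k‖ := norm_add_le _ _
      _ ≤ (‖F0 k + F1 k‖ + ‖F2 k‖) + ‖F3 k‖ := by gcongr; exact norm_add_le _ _
      _ ≤ ((‖F0 k‖ + ‖F1 k‖) + ‖F2 k‖) + ‖F3 k‖ := by gcongr; exact norm_add_le _ _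
  refine ⟨hsummable, ?_⟩
  rw [hSf.tsum_eq]
  have hAc : ∑ c ∈ Finset.Icc 1 (p - 1), ((‖S p c‖ : ℝ) : ℂ) ^ 6 = ((A:ℝ) : ℂ) := by
    rw [hA]
    push_cast
    rfl
  rw [hAc]
  have hqp : q = (p:ℂ) * (p:ℂ)^(-(3*s+7)) := by
    have hp1 : (p:ℂ) = Complex.exp (L * 1) := by
      have := hP 1
      rwa [Complex.cpow_one] at this
    rw [hqdef, hP, hP, hp1, ← Complex.exp_add]
    congr 1
    ring
  rw [hb1, hb2, hb3]
  have hw : (1-q) * (1-q)⁻¹ = 1 := mul_inv_cancel₀ h1q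
  linear_combination (-1 : ℂ) * hw - (1-q)⁻¹ * hqp
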